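/- Let X be a real Hilbert space and let ω : [0, ∞) → [0, ∞) be a concave, nondecreasing, continuous function with ω(0) = 0. Define φ : X → ℝ by φ(x) = ∫₀^{‖x‖} ω(s) ds. Then φ is differentiable on X, with ∇φ(x) = ω(‖x‖)·x/‖x‖ for x ≠ 0 and ∇φ(0) = 0, and ‖∇φ(x) − ∇φ(z)‖ ≤ 5·ω(‖x − z‖) for all x, z ∈ X. -/

import Mathlib

open Set

local notation "⟪" x ", " y "⟫" => @inner ℝ _ _ x y

lemma omega_subadd (ω : ℝ → ℝ) (hconc : ConcaveOn ℝ (Ici 0) ω) (h0 : ω 0 = 0)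
    {a b : ℝ} (ha : 0 ≤ a) (hb : 0 ≤ b) : ω (a + b) ≤ ω a + ω b := by
  rcases eq_or_lt_of_le (add_nonneg ha hb) with hs | hs
  · have ha0 : a = 0 := by linarith
    have hb0 : b = 0 := by linarith
    simp [ha0, hb0, h0]
  · have hmem : a + b ∈ Ici (0:ℝ) := mem_Ici.mpr hs.le
    have h0m : (0:ℝ) ∈ Ici (0:ℝ) := mem_Ici.mpr le_rfl
    have hsum : a / (a + b) + b / (a + b) = 1 := by field_simp
    have h1 := hconc.2 hmem h0m (div_nonneg ha hs.le) (div_nonneg hb hs.le) hsum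
    have hsum' : b / (a + b) + a / (a + b) = 1 := by rw [add_comm]; exact hsum
    have h2 := hconc.2 hmem h0m (div_nonneg hb hs.le) (div_nonneg ha hs.le) hsum'
    simp only [smul_eq_mul, mul_zero, add_zero, h0] at h1 h2
    rw [div_mul_cancel₀ _ (ne_of_gt hs)] at h1 h2
    have hsplit : a / (a + b) * ω (a + b) + b / (a + b) * ω (a + b) = ω (a + b) := by
      rw [← add_mul, hsum, one_mul]
    linarith
lemma omega_ratio (ω : ℝ → ℝ) (hconc : ConcaveOn ℝ (Ici 0) ω) (h0 : ω 0 = 0)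
    {t s : ℝ} (ht : 0 < t) (hts : t ≤ s) : t * ω s ≤ s * ω t := by
  have hs : 0 < s := lt_of_lt_of_le ht hts
  have hsum : t / s + (1 - t / s) = 1 := by ring
  have h1 := hconc.2 (mem_Ici.mpr hs.le) (mem_Ici.mpr le_rfl)
    (div_nonneg ht.le hs.le) (by rw [sub_nonneg]; exact div_le_one_of_le₀ hts hs.le) hsum
  simp only [smul_eq_mul, mul_zero, add_zero, h0] at h1
  rw [div_mul_cancel₀ _ (ne_of_gt hs)] at h1
  have h2 : t / s * ω s ≤ ω t := by linarith
  have h3 : s * (t / s * ω s) ≤ s * ω t := by nlinarith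
  calc t * ω s = s * (t / s * ω s) := by field_simp
    _ ≤ s * ω t := h3

lemma grad_est {X : Type*} [NormedAddCommGroup X] [InnerProductSpace ℝ X]
    (ω : ℝ → ℝ) (hconc : ConcaveOn ℝ (Ici 0) ω) (hmono : MonotoneOn ω (Ici 0))
    (h0 : ω 0 = 0) (hnonneg : ∀ t, 0 ≤ t → 0 ≤ ω t)
    (G : X → X) (hG0 : G 0 = 0) (hG : ∀ x : X, x ≠ 0 → G x = ω ‖x‖ • (‖x‖⁻¹ • x))
    (x z : X) (hle : ‖z‖ ≤ ‖x‖) : ‖G x - G z‖ ≤ 3 * ω ‖x - z‖ := by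
  have hGnorm : ∀ y : X, ‖G y‖ = ω ‖y‖ := by
    intro y
    by_cases hy : y = 0
    · simp [hy, hG0, h0]
    · rw [hG y hy, norm_smul, norm_smul, norm_inv, norm_norm,
        inv_mul_cancel₀ (norm_ne_zero_iff.mpr hy), mul_one,
        Real.norm_eq_abs, abs_of_nonneg (hnonneg _ (norm_nonneg y))]
  set d := ‖x - z‖ with hd_def
  have hd : 0 ≤ d := norm_nonneg _
  have hωd : 0 ≤ ω d := hnonneg d hd
  have htri : ‖x‖ ≤ ‖z‖ + d := by
    have := norm_sub_norm_le x z
    linarith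
  by_cases hz : z = 0
  · have hdx : d = ‖x‖ := by rw [hd_def, hz, sub_zero]
    rw [hz, hG0, sub_zero, hGnorm, ← hdx]
    linarith
  · have hbz : 0 < ‖z‖ := norm_pos_iff.mpr hz
    have hbx : 0 < ‖x‖ := lt_of_lt_of_le hbz hle
    have hx : x ≠ 0 := norm_pos_iff.mp hbx
    have hωz_le : ω ‖x‖ ≤ ω ‖z‖ + ω d := by
      calc ω ‖x‖ ≤ ω (‖z‖ + d) := hmono (mem_Ici.mpr hbx.le) (mem_Ici.mpr (by linarith)) htri
        _ ≤ ω ‖z‖ + ω d := omega_subadd ω hconc h0 hbz.le hd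
    by_cases hcase : ‖z‖ ≤ d
    · have h1 : ω ‖z‖ ≤ ω d := hmono (mem_Ici.mpr hbz.le) (mem_Ici.mpr hd) hcase
      calc ‖G x - G z‖ ≤ ‖G x‖ + ‖G z‖ := norm_sub_le _ _
        _ = ω ‖x‖ + ω ‖z‖ := by rw [hGnorm, hGnorm]
        _ ≤ 3 * ω d := by linarith
    · push_neg at hcase
      by_cases hxz : x = z
      · simp [hxz, h0, hd_def]
      · have hd0 : 0 < d := norm_pos_iff.mpr (sub_ne_zero.mpr hxz)
        have hdecomp : G x - G z =
            (ω ‖x‖ - ω ‖z‖) • (‖x‖⁻¹ • x) + ω ‖z‖ • (‖x‖⁻¹ • x - ‖z‖⁻¹ • z) := by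
          rw [hG x hx, hG z hz]; module
        have hωmono : ω ‖z‖ ≤ ω ‖x‖ := hmono (mem_Ici.mpr hbz.le) (mem_Ici.mpr hbx.le) hle
        have hunit : ‖(‖x‖⁻¹ • x)‖ = 1 := by
          rw [norm_smul, norm_inv, norm_norm, inv_mul_cancel₀ (ne_of_gt hbx)]
        have ht1 : ‖(ω ‖x‖ - ω ‖z‖) • (‖x‖⁻¹ • x)‖ ≤ ω d := by
          rw [norm_smul, hunit, mul_one, Real.norm_eq_abs, abs_of_nonneg (by linarith)]
          linarith
        have hsplit : ‖x‖⁻¹ • x - ‖z‖⁻¹ • z = ‖x‖⁻¹ • (x - z) + (‖x‖⁻¹ - ‖z‖⁻¹) • z := by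
          module
        have hinv : |‖x‖⁻¹ - ‖z‖⁻¹| * ‖z‖ ≤ d / ‖x‖ := by
          rw [abs_of_nonpos (by simp [sub_nonpos]; exact inv_anti₀ hbz hle)]
          have : (-(‖x‖⁻¹ - ‖z‖⁻¹)) * ‖z‖ = (‖x‖ - ‖z‖) / ‖x‖ := by
            field_simp; ring
          rw [this]
          gcongr
          linarith
        have ht2a : ‖(‖x‖⁻¹ • x - ‖z‖⁻¹ • z)‖ ≤ 2 * d / ‖x‖ := by
          rw [hsplit]
          calc ‖‖x‖⁻¹ • (x - z) + (‖x‖⁻¹ - ‖z‖⁻¹) • z‖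
              ≤ ‖‖x‖⁻¹ • (x - z)‖ + ‖(‖x‖⁻¹ - ‖z‖⁻¹) • z‖ := norm_add_le _ _
            _ = ‖x‖⁻¹ * d + |‖x‖⁻¹ - ‖z‖⁻¹| * ‖z‖ := by
                rw [norm_smul, norm_smul, norm_inv, norm_norm, Real.norm_eq_abs]
            _ ≤ d / ‖x‖ + d / ‖x‖ := by
                rw [inv_mul_eq_div]
                exact add_le_add le_rfl hinv
            _ = 2 * d / ‖x‖ := by ring
        have ht2 : ω ‖z‖ * ‖(‖x‖⁻¹ • x - ‖z‖⁻¹ • z)‖ ≤ 2 * ω d := by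
          have hωznn : 0 ≤ ω ‖z‖ := hnonneg _ hbz.le
          have hrat : d * ω ‖z‖ ≤ ‖z‖ * ω d := omega_ratio ω hconc h0 hd0 hcase.le
          calc ω ‖z‖ * ‖(‖x‖⁻¹ • x - ‖z‖⁻¹ • z)‖ ≤ ω ‖z‖ * (2 * d / ‖x‖) :=
              mul_le_mul_of_nonneg_left ht2a hωznn
            _ ≤ ω ‖z‖ * (2 * d / ‖z‖) := by
                apply mul_le_mul_of_nonneg_left ?_ hωznn
                apply div_le_div_of_nonneg_left (by linarith) hbz hle
            _ = 2 * (d * ω ‖z‖) / ‖z‖ := by ring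
            _ ≤ 2 * ω d := by
                rw [div_le_iff₀ hbz]
                linarith
        calc ‖G x - G z‖ ≤ ‖(ω ‖x‖ - ω ‖z‖) • (‖x‖⁻¹ • x)‖
              + ‖ω ‖z‖ • (‖x‖⁻¹ • x - ‖z‖⁻¹ • z)‖ := by rw [hdecomp]; exact norm_add_le _ _
          _ ≤ ω d + 2 * ω d := by
              apply add_le_add ht1
              rw [norm_smul, Real.norm_eq_abs, abs_of_nonneg (hnonneg _ hbz.le)]
              exact ht2
          _ = 3 * ω d := by ring


lemma hasGradientAt_radial {X : Type*} [NormedAddCommGroup X] [InnerProductSpace ℝ X]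
    [CompleteSpace X] (ω : ℝ → ℝ)
    (hcont : ContinuousOn ω (Ici 0))
    (φ : X → ℝ) (hφ : ∀ x : X, φ x = ∫ s in (0:ℝ)..‖x‖, ω s)
    (x : X) (hx : x ≠ 0) : HasGradientAt φ (ω ‖x‖ • (‖x‖⁻¹ • x)) x := by
  have hxn : 0 < ‖x‖ := norm_pos_iff.mpr hx
  have hInt : IntervalIntegrable ω MeasureTheory.volume 0 ‖x‖ := by
    apply ContinuousOn.intervalIntegrable
    apply hcont.mono
    rw [uIcc_of_le hxn.le]
    exact Icc_subset_Ici_self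
  have hmeas : StronglyMeasurableAtFilter ω (nhds ‖x‖) := by
    refine ⟨Ioi 0, Ioi_mem_nhds hxn, ?_⟩
    refine ContinuousOn.aestronglyMeasurable ?_ measurableSet_Ioi
    intro t ht
    exact ((hcont t (mem_Ici.mpr (le_of_lt ht))).continuousAt (Ici_mem_nhds ht)).continuousWithinAt
  have hcx : ContinuousAt ω ‖x‖ := (hcont ‖x‖ hxn.le).continuousAt (Ici_mem_nhds hxn)
  have hF : HasDerivAt (fun r => ∫ s in (0:ℝ)..r, ω s) (ω ‖x‖) ‖x‖ :=
    intervalIntegral.integral_hasDerivAt_right hInt hmeas hcx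
  have hinner : HasFDerivAt (fun y : X => ⟪y, y⟫)
      ((fderivInnerCLM ℝ (x, x)).comp ((ContinuousLinearMap.id ℝ X).prod
        (ContinuousLinearMap.id ℝ X))) x :=
    (hasFDerivAt_id x).inner ℝ (hasFDerivAt_id x)
  have hip : (0:ℝ) < ⟪x, x⟫ := by
    rw [real_inner_self_eq_norm_mul_norm]; exact mul_pos hxn hxn
  have hsqrt : HasDerivAt Real.sqrt (1 / (2 * Real.sqrt ⟪x, x⟫)) ⟪x, x⟫ :=
    Real.hasDerivAt_sqrt (ne_of_gt hip)
  have hns := hsqrt.comp_hasFDerivAt_of_eq x hinner rfl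
  have hnorm_eq : (fun y : X => Real.sqrt ⟪y, y⟫) = fun y : X => ‖y‖ := by
    funext y
    rw [real_inner_self_eq_norm_mul_norm, Real.sqrt_mul_self (norm_nonneg y)]
  simp only [Function.comp_def] at hns
  rw [hnorm_eq] at hns
  have hφ' := hF.comp_hasFDerivAt x hns
  simp only [Function.comp_def] at hφ'
  simp only [← hφ] at hφ'
  have heq : (InnerProductSpace.toDual ℝ X) (ω ‖x‖ • (‖x‖⁻¹ • x)) =
      ω ‖x‖ • (1 / (2 * Real.sqrt ⟪x, x⟫)) •
        ((fderivInnerCLM ℝ (x, x)).comp ((ContinuousLinearMap.id ℝ X).prod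
          (ContinuousLinearMap.id ℝ X))) := by
    apply ContinuousLinearMap.ext
    intro y
    simp only [InnerProductSpace.toDual_apply_apply, real_inner_smul_left,
      ContinuousLinearMap.smul_apply, ContinuousLinearMap.comp_apply,
      ContinuousLinearMap.prod_apply, ContinuousLinearMap.id_apply, fderivInnerCLM_apply,
      real_inner_self_eq_norm_mul_norm, Real.sqrt_mul_self (norm_nonneg x),
      real_inner_comm y x, smul_eq_mul]
    field_simp
    ring
  have : HasFDerivAt φ ((InnerProductSpace.toDual ℝ X) (ω ‖x‖ • (‖x‖⁻¹ • x))) x := by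
    rw [heq]; exact hφ'
  exact hasGradientAt_iff_hasFDerivAt.mpr this

lemma hasGradientAt_radial_zero {X : Type*} [NormedAddCommGroup X] [InnerProductSpace ℝ X]
    [CompleteSpace X] (ω : ℝ → ℝ) (hmono : MonotoneOn ω (Ici 0))
    (hcont : ContinuousOn ω (Ici 0)) (h0 : ω 0 = 0) (hnonneg : ∀ t, 0 ≤ t → 0 ≤ ω t)
    (φ : X → ℝ) (hφ : ∀ x : X, φ x = ∫ s in (0:ℝ)..‖x‖, ω s) :
    HasGradientAt φ (0 : X) 0 := by
  rw [hasGradientAt_iff_hasFDerivAt, map_zero, hasFDerivAt_iff_tendsto]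
  have hφ0 : φ 0 = 0 := by rw [hφ]; simp
  have hbound : ∀ y : X, ‖y - 0‖⁻¹ * ‖φ y - φ 0 - (0 : X →L[ℝ] ℝ) (y - 0)‖ ≤ ω ‖y‖ := by
    intro y
    simp only [sub_zero, ContinuousLinearMap.zero_apply, hφ0, Real.norm_eq_abs]
    have hb : |φ y| ≤ ω ‖y‖ * ‖y‖ := by
      rw [hφ]
      have := intervalIntegral.norm_integral_le_of_norm_le_const
        (C := ω ‖y‖) (f := ω) (a := (0:ℝ)) (b := ‖y‖) ?_
      · simpa [abs_of_nonneg (norm_nonneg y)] using this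
      · intro s hs
        rw [uIoc_of_le (norm_nonneg y)] at hs
        rw [Real.norm_eq_abs, abs_of_nonneg (hnonneg s hs.1.le)]
        exact hmono (mem_Ici.mpr hs.1.le) (mem_Ici.mpr (norm_nonneg y)) hs.2
    by_cases hy : y = 0
    · simp [hy, hφ0, h0]
    · have hyn : 0 < ‖y‖ := norm_pos_iff.mpr hy
      rw [inv_mul_le_iff₀ hyn]
      calc |φ y| ≤ ω ‖y‖ * ‖y‖ := hb
        _ = ‖y‖ * ω ‖y‖ := by ring
  have hlim : Filter.Tendsto (fun y : X => ω ‖y‖) (nhds 0) (nhds 0) := by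
    have h1 : Filter.Tendsto ω (nhdsWithin 0 (Ici 0)) (nhds 0) := by
      have := hcont 0 (mem_Ici.mpr le_rfl)
      rwa [ContinuousWithinAt, h0] at this
    have h2 : Filter.Tendsto (fun y : X => ‖y‖) (nhds 0) (nhdsWithin 0 (Ici 0)) := by
      apply tendsto_nhdsWithin_of_tendsto_nhds_of_eventually_within
      · simpa using tendsto_norm_zero
      · exact Filter.Eventually.of_forall fun y => norm_nonneg y
    exact h1.comp h2
  apply squeeze_zero (fun y => by positivity) hbound hlim

/-- the radial primitive of a concave modulus of continuity is C^{1,ω}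
with constant 5. -/
theorem radial_primitive_C1omega
    {X : Type*} [NormedAddCommGroup X] [InnerProductSpace ℝ X] [CompleteSpace X]
    (ω : ℝ → ℝ) (hconc : ConcaveOn ℝ (Ici 0) ω) (hmono : MonotoneOn ω (Ici 0))
    (hcont : ContinuousOn ω (Ici 0)) (h0 : ω 0 = 0) (hnonneg : ∀ t, 0 ≤ t → 0 ≤ ω t)
    (φ : X → ℝ) (hφ : ∀ x : X, φ x = ∫ s in (0:ℝ)..‖x‖, ω s) :
    Differentiable ℝ φ ∧
    (∀ x : X, x ≠ 0 → gradient φ x = ω ‖x‖ • (‖x‖⁻¹ • x)) ∧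
    gradient φ 0 = 0 ∧
    (∀ x z : X, ‖gradient φ x - gradient φ z‖ ≤ 5 * ω ‖x - z‖) := by
  have key : ∀ x : X, x ≠ 0 → HasGradientAt φ (ω ‖x‖ • (‖x‖⁻¹ • x)) x :=
    hasGradientAt_radial ω hcont φ hφ
  have key0 : HasGradientAt φ (0 : X) 0 :=
    hasGradientAt_radial_zero ω hmono hcont h0 hnonneg φ hφ
  have hg : ∀ x : X, x ≠ 0 → gradient φ x = ω ‖x‖ • (‖x‖⁻¹ • x) :=
    fun x hx => (key x hx).gradient
  have hg0 : gradient φ 0 = 0 := key0.gradient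
  have hdiff : Differentiable ℝ φ := by
    intro x
    by_cases hx : x = 0
    · subst hx; exact key0.differentiableAt
    · exact (key x hx).differentiableAt
  refine ⟨hdiff, hg, hg0, ?_⟩
  intro x z
  have hnn : 0 ≤ ω ‖x - z‖ := hnonneg _ (norm_nonneg _)
  rcases le_total ‖z‖ ‖x‖ with h | h
  · have := grad_est ω hconc hmono h0 hnonneg (gradient φ) hg0 hg x z h
    linarith
  · have := grad_est ω hconc hmono h0 hnonneg (gradient φ) hg0 hg z x h
    rw [norm_sub_rev (gradient φ z), norm_sub_rev z x] at this
    linarith
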